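/- Let (G_i,u_i), i ∈ I, be a family of linearly ordered lattice-ordered groups with strong units; put u = (u_i)_{i∈I} and G = {g ∈ ∏_{i∈I} G_i : ∃ n ∈ ℕ, −n·u ≤ g ≤ n·u}, so that M = Γ(G,u) is the direct product of the linearly ordered pseudo MV-algebras Γ(G_i,u_i). Then the following are equivalent: (i) M has a strict square root; (ii) M is two-divisible (for every y ∈ M there is x ∈ M with x + x = y) and there is h ∈ C(G) with h + h = u; (iii) G is two-divisible and there is h ∈ C(G) with h + h = u. In either case the map r(x) = (x+u)/2 (the element h with h + h = x + u) is defined for each x ∈ M and is a strict square root on M. -/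

import Mathlib

set_option linter.unusedSectionVars false
set_option maxHeartbeats 1000000

section Core

variable {G : Type} [Lattice G] [AddGroup G]

/-- `u` is a strong unit of the ℓ-group `G`. -/
def IsStrongUnit (u : G) : Prop :=
  0 ≤ u ∧ ∀ g : G, ∃ n : ℕ, 1 ≤ n ∧ g ≤ n • u

/-- Truncated addition `x ⊕ y = (x + y) ⊓ u` of the pseudo MV-algebra `Γ(G,u)`. -/
def oplus (u x y : G) : G := (x + y) ⊓ u

/-- Left negation `x⁻ = u - x`. -/
def negl (u x : G) : G := u - x

/-- Right negation `x~ = -x + u`. -/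
def negr (u x : G) : G := -x + u

/-- `x ⊙ y = (x - u + y) ⊔ 0`. -/
def odot (u x y : G) : G := (x - u + y) ⊔ 0

/-- `r` is a square root on the pseudo MV-algebra `M = Γ(G,u)`:
it maps `M` to `M` and satisfies (Sq1), (Sq2), (Sq3). -/
def IsSquareRoot (u : G) (r : G → G) : Prop :=
  (∀ x, 0 ≤ x → x ≤ u → 0 ≤ r x ∧ r x ≤ u) ∧
  (∀ x, 0 ≤ x → x ≤ u → odot u (r x) (r x) = x) ∧
  (∀ x y, 0 ≤ x → x ≤ u → 0 ≤ y → y ≤ u → odot u y y ≤ x → y ≤ r x) ∧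
  (∀ x, 0 ≤ x → x ≤ u → r (negl u x) = oplus u (negl u (r x)) (r 0)) ∧
  (∀ x, 0 ≤ x → x ≤ u → r (negr u x) = oplus u (r 0) (negr u (r x)))

/-- `r` is strict: `r 0 = r 0⁻`. -/
def IsStrict (u : G) (r : G → G) : Prop := r 0 = negl u (r 0)

end Core

/-- An additive structure is two-divisible if every element is `h + h` for some `h`. -/
def TwoDivisible (A : Type) [Add A] : Prop := ∀ g : A, ∃ h : A, h + h = g

/-- Membership in `G = {g ∈ ∏ K i : ∃ n, -n•v ≤ g ≤ n•v}`. -/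
def BoundedElt {ι : Type} {K : ι → Type} [∀ i, AddGroup (K i)] [∀ i, LinearOrder (K i)]
    (v : ∀ i, K i) (g : ∀ i, K i) : Prop :=
  ∃ n : ℕ, ∀ i, -(n • v i) ≤ g i ∧ g i ≤ n • v i

section Helpers
variable {L : Type} [AddGroup L] [LinearOrder L]
  [CovariantClass L L (· + ·) (· ≤ ·)] [CovariantClass L L (Function.swap (· + ·)) (· ≤ ·)]

lemma half_le {a b : L} (h : a + a ≤ b + b) : a ≤ b := by
  by_contra hab
  push_neg at hab
  exact absurd h (not_le.2 (add_lt_add hab hab))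

lemma half_eq {a b : L} (h : a + a = b + b) : a = b :=
  le_antisymm (half_le h.le) (half_le h.ge)

lemma nsmul_two_eq (n : ℕ) (a : L) : n • (a + a) = n • a + n • a := by
  rw [← two_nsmul, ← mul_nsmul, mul_comm, mul_nsmul, two_nsmul]

lemma nsmul_mono {a b : L} (h : a ≤ b) (n : ℕ) : n • a ≤ n • b := by
  induction n with
  | zero => simp
  | succ n ih => rw [succ_nsmul, succ_nsmul]; exact add_le_add ih h

lemma nsmul_nonneg' {a : L} (h : 0 ≤ a) (n : ℕ) : 0 ≤ n • a := by
  simpa using nsmul_mono h n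

lemma exists_half_nsmul {h w : L} (hc : ∀ z : L, AddCommute h z) (hw : h + h = w)
    (D : ∀ a : L, 0 ≤ a → a ≤ w → ∃ b : L, b + b = a) :
    ∀ (n : ℕ) (p : L), 0 ≤ p → p ≤ n • w → ∃ q : L, q + q = p := by
  intro n
  induction n with
  | zero =>
    intro p h0 h1
    rw [zero_nsmul] at h1
    exact ⟨0, by rw [add_zero]; exact (le_antisymm h1 h0).symm⟩
  | succ n ih =>
    intro p h0 h1
    rcases le_total p w with h2 | h2
    · exact D p h0 h2
    · have hp0 : 0 ≤ -w + p := by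
        have := add_le_add_left h2 (-w)
        simpa using this
      have hpn : -w + p ≤ n • w := by
        have := add_le_add_left h1 (-w)
        rw [succ_nsmul'] at this
        simpa using this
      obtain ⟨q, hq⟩ := ih (-w + p) hp0 hpn
      refine ⟨h + q, ?_⟩
      have hcq : h + q = q + h := hc q
      calc h + q + (h + q) = h + (q + h) + q := by simp [add_assoc]
        _ = h + (h + q) + q := by rw [← hcq]
        _ = (h + h) + (q + q) := by simp [add_assoc]
        _ = w + (-w + p) := by rw [hw, hq]
        _ = p := add_neg_cancel_left w p

/-- extend commutation on `[0,w]` to all of `L` given a strong-unit-like bound. -/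
lemma central_all {h w : L}
    (hcm : ∀ a : L, 0 ≤ a → a ≤ w → AddCommute h a)
    (hwc : AddCommute h w)
    (hstr : ∀ g : L, ∃ n : ℕ, g ≤ n • w) :
    ∀ a : L, AddCommute h a := by
  have pos : ∀ (n : ℕ) (a : L), 0 ≤ a → a ≤ n • w → AddCommute h a := by
    intro n
    induction n with
    | zero =>
      intro a h0 h1
      rw [zero_nsmul] at h1
      rw [le_antisymm h1 h0]
      exact AddCommute.zero_right h
    | succ n ih =>
      intro a h0 h1
      rcases le_total a w with h2 | h2
      · exact hcm a h0 h2
      · have hb0 : 0 ≤ -w + a := by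
          have := add_le_add_left h2 (-w); simpa using this
        have hbn : -w + a ≤ n • w := by
          have := add_le_add_left h1 (-w)
          rw [succ_nsmul'] at this
          simpa using this
        have hcb := ih (-w + a) hb0 hbn
        have : AddCommute h (w + (-w + a)) := hwc.add_right hcb
        simpa using this
  intro a
  have hp : AddCommute h (a ⊔ 0) := by
    obtain ⟨n, hn⟩ := hstr (a ⊔ 0)
    exact pos n _ le_sup_right hn
  have hq : AddCommute h ((-a) ⊔ 0) := by
    obtain ⟨n, hn⟩ := hstr ((-a) ⊔ 0)
    exact pos n _ le_sup_right hn
  have hdecomp : a = (a ⊔ 0) - ((-a) ⊔ 0) := by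
    rcases le_total a 0 with h2 | h2
    · rw [sup_eq_right.2 h2, sup_eq_left.2 (neg_nonneg.2 h2)]
      simp
    · rw [sup_eq_left.2 h2, sup_eq_right.2 (neg_nonpos.2 h2)]
      simp
  rw [hdecomp, sub_eq_add_neg]
  exact hp.add_right hq.neg_right

/-- core commutation extraction lemma. -/
lemma comm_of_eqs {b c a : L}
    (e1 : b + -c + -c + b = a) (e2 : c + -b + c + -b = -a) :
    AddCommute c b := by
  have e3 : b + -c + b + -c = a := by
    have h2 := congrArg Neg.neg e2
    rw [neg_neg] at h2
    rw [← h2]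
    simp [neg_add_rev, add_assoc]
  have e4 : b + (-c + (-c + b)) = b + (-c + (b + -c)) := by
    calc b + (-c + (-c + b)) = b + -c + -c + b := by simp [add_assoc]
      _ = a := e1
      _ = b + -c + b + -c := e3.symm
      _ = b + (-c + (b + -c)) := by simp [add_assoc]
  have e5 : -c + b = b + -c := add_left_cancel (add_left_cancel e4)
  have : AddCommute (-c) b := e5
  simpa using this.neg_left

end Helpers

section CentralHelpers
variable {A : Type} [AddGroup A]

lemma ch_double {h q : A} (hc : AddCommute h q) :
    (q + h) + (q + h) = (q + q) + (h + h) := by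
  calc (q + h) + (q + h) = q + ((h + q) + h) := by simp [add_assoc]
    _ = q + ((q + h) + h) := by rw [hc.eq]
    _ = (q + q) + (h + h) := by simp [add_assoc]

lemma ch_sq1 {h q : A} (hc : AddCommute h q) :
    (q + h) - (h + h) + (q + h) = q + q := by
  calc (q + h) - (h + h) + (q + h)
      = q + (-h + (q + h)) := by simp [sub_eq_add_neg, neg_add_rev, add_assoc]
    _ = q + (-h + (h + q)) := by rw [← hc.eq]
    _ = q + q := by rw [neg_add_cancel_left]

lemma ch_halfneg {h q : A} (hc : AddCommute h q) :
    (h + -q) + (h + -q) = (h + h) + -(q + q) := by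
  have e : h + -q = -q + h := hc.neg_right
  calc (h + -q) + (h + -q) = h + ((-q + h) + -q) := by simp [add_assoc]
    _ = h + ((h + -q) + -q) := by rw [← e]
    _ = (h + h) + -(q + q) := by simp [neg_add_rev, add_assoc]

lemma ch_vsub {h q : A} (hc : AddCommute h q) :
    (h + -q) + h = (h + h) + -q := by
  have e : -q + h = h + -q := (hc.neg_right).symm
  calc (h + -q) + h = h + (-q + h) := by simp [add_assoc]
    _ = h + (h + -q) := by rw [e]
    _ = (h + h) + -q := by simp [add_assoc]

lemma ch_rhs1 {h q : A} : ((h + h) - (q + h)) + h = (h + -q) + h := by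
  simp [sub_eq_add_neg, neg_add_rev, add_assoc]

lemma ch_rhs2 {h q : A} (hc : AddCommute h q) :
    h + (-(q + h) + (h + h)) = (h + h) + -q := by
  have e : AddCommute (h + h) (-q) := (hc.add_left hc).neg_right
  calc h + (-(q + h) + (h + h)) = -q + (h + h) := by simp [neg_add_rev, add_assoc]
    _ = (h + h) + -q := e.eq.symm
end CentralHelpers

section Pads
variable {ι : Type} {K : ι → Type}
  [∀ i, AddGroup (K i)] [∀ i, LinearOrder (K i)]
  [∀ i, CovariantClass (K i) (K i) (· + ·) (· ≤ ·)]
  [∀ i, CovariantClass (K i) (K i) (Function.swap (· + ·)) (· ≤ ·)]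

noncomputable def padE (i : ι) (a : K i) : ∀ j, K j := by
  classical
  exact fun j => if h : i = j then h ▸ a else 0

@[simp] lemma padE_same (i : ι) (a : K i) : padE i a i = a := by
  simp [padE]

lemma padE_ne {i j : ι} (h : ¬ i = j) (a : K i) : padE i a j = 0 := by
  simp [padE, h]

variable {v : ∀ i, K i}

lemma padE_mem (hv : ∀ i, IsStrongUnit (v i)) {i : ι} {a : K i}
    (h0 : 0 ≤ a) (h1 : a ≤ v i) : 0 ≤ padE i a ∧ padE i a ≤ v := by
  constructor <;> intro j <;> by_cases hj : i = j
  · subst hj; simpa using h0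
  · simp [padE_ne hj]
  · subst hj; simpa using h1
  · rw [padE_ne hj]; exact (hv j).1

lemma padE_bounded (hv : ∀ i, IsStrongUnit (v i)) (i : ι) (a : K i) :
    BoundedElt v (padE i a) := by
  obtain ⟨n1, -, hn1⟩ := (hv i).2 a
  obtain ⟨n2, -, hn2⟩ := (hv i).2 (-a)
  refine ⟨n1 + n2, fun j => ?_⟩
  by_cases hj : i = j
  · subst hj
    rw [padE_same]
    constructor
    · rw [neg_le]
      calc -a ≤ n2 • v i := hn2
        _ ≤ (n1 + n2) • v i := by
            rw [add_nsmul]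
            exact le_add_of_nonneg_left (nsmul_nonneg' (hv i).1 n1)
    · calc a ≤ n1 • v i := hn1
        _ ≤ (n1 + n2) • v i := by
            rw [add_nsmul]
            exact le_add_of_nonneg_right (nsmul_nonneg' (hv i).1 n2)
  · have := nsmul_nonneg' (hv j).1 (n1 + n2)
    rw [padE_ne hj]
    exact ⟨neg_nonpos.2 this, this⟩

end Pads

section Main
variable {ι : Type} {K : ι → Type}
  [∀ i, AddGroup (K i)] [∀ i, LinearOrder (K i)]
  [∀ i, CovariantClass (K i) (K i) (· + ·) (· ≤ ·)]
  [∀ i, CovariantClass (K i) (K i) (Function.swap (· + ·)) (· ≤ ·)]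
  {v : ∀ i, K i}

/-- (i) → componentwise centrality of `r 0`, `r 0 + r 0 = v`, and `M`-divisibility. -/
lemma keyA (hv : ∀ i, IsStrongUnit (v i))
    (r : (∀ i, K i) → (∀ i, K i)) (hr : IsSquareRoot v r) (hst : IsStrict v r) :
    (∀ i (a : K i), AddCommute (r 0 i) a) ∧ (r 0 + r 0 = v) ∧
    (∀ y, 0 ≤ y → y ≤ v → ∃ x, 0 ≤ x ∧ x ≤ v ∧ x + x = y) := by
  obtain ⟨hrange, hsq1, hsq2, hsq3l, hsq3r⟩ := hr
  have hv0 : (0 : ∀ i, K i) ≤ v := fun i => (hv i).1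
  have hm := hrange 0 le_rfl hv0
  have hhv : r 0 + r 0 = v := by
    have h1 : r 0 = v - r 0 := hst
    have h2 := congrArg (· + r 0) h1
    rw [sub_add_cancel] at h2
    exact h2
  have hhvi : ∀ i, r 0 i + r 0 i = v i := fun i => congrFun hhv i
  have hodot0 : odot v (r 0) (r 0) = 0 := by
    have hz : r 0 - v + r 0 = 0 := by
      rw [← hhv, sub_eq_add_neg, neg_add_rev]
      simp [add_assoc]
    rw [odot, hz, sup_idem]
  have h_le_r : ∀ x, 0 ≤ x → x ≤ v → r 0 ≤ r x := fun x hx0 hxv =>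
    hsq2 x (r 0) hx0 hxv hm.1 hm.2 (by rw [hodot0]; exact hx0)
  have sq1i : ∀ x, 0 ≤ x → x ≤ v → ∀ i, (r x i - v i + r x i) ⊔ 0 = x i := by
    intro x hx0 hxv i
    have := congrFun (hsq1 x hx0 hxv) i
    simpa [odot] using this
  -- commutation on the interval, componentwise
  have hcomm_int : ∀ i (a : K i), 0 ≤ a → a ≤ v i → AddCommute (r 0 i) a := by
    intro i a ha0 hav
    rcases eq_or_lt_of_le ha0 with h0 | h0
    · rw [← h0]; exact AddCommute.zero_right _
    rcases eq_or_lt_of_le hav with h1 | h1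
    · rw [h1]
      have : AddCommute (r 0 i) (r 0 i + r 0 i) :=
        (AddCommute.refl _).add_right (AddCommute.refl _)
      rwa [hhvi i] at this
    obtain ⟨hX0, hXv⟩ := padE_mem hv ha0 hav (i := i) (a := a)
    set X := padE i a with hX
    have hs1 : (r X i - v i + r X i) ⊔ 0 = a := by
      have := sq1i X hX0 hXv i
      rwa [hX, padE_same] at this
    have hhs : r 0 i ≤ r X i := h_le_r X hX0 hXv i
    have e1raw : r X i - v i + r X i = a := by
      rcases le_total (r X i - v i + r X i) 0 with hle | hge
      · rw [sup_eq_right.2 hle] at hs1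
        exact absurd hs1.symm (ne_of_gt h0)
      · rwa [sup_eq_left.2 hge] at hs1
    -- the negr side
    have hX'0 : (0 : ∀ j, K j) ≤ negr v X := by
      intro j
      have := add_le_add_left (hXv j) (-(X j))
      simpa [negr] using this
    have hX'v : negr v X ≤ v := by
      intro j
      have h2 : -(X j) + v j ≤ 0 + v j := add_le_add (neg_nonpos.2 (hX0 j)) (le_refl (v j))
      simpa [negr] using h2
    have hwq := hsq3r X hX0 hXv
    have hwi : r (negr v X) i = r 0 i + (-(r X i) + v i) := by
      have hle : r 0 i + (-(r X i) + v i) ≤ v i := by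
        have h2 : r 0 i + -(r X i) ≤ 0 := by
          have := add_le_add_right hhs (-(r X i))
          simpa using this
        calc r 0 i + (-(r X i) + v i) = (r 0 i + -(r X i)) + v i := (add_assoc _ _ _).symm
          _ ≤ 0 + v i := add_le_add h2 le_rfl
          _ = v i := zero_add _
      have h3 := congrFun hwq i
      simp only [oplus, negr, Pi.inf_apply, Pi.add_apply, Pi.neg_apply] at h3
      rwa [inf_eq_left.2 hle] at h3
    have hXi' : (negr v X) i = -a + v i := by simp [negr, hX]
    have hpos : (0 : K i) < -a + v i := by
      have := add_lt_add_left h1 (-a)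
      simpa using this
    have hs1' : (r (negr v X) i - v i + r (negr v X) i) ⊔ 0 = -a + v i := by
      have := sq1i (negr v X) hX'0 hX'v i
      rwa [hXi'] at this
    have e2raw : r (negr v X) i - v i + r (negr v X) i = -a + v i := by
      rcases le_total (r (negr v X) i - v i + r (negr v X) i) 0 with hle | hge
      · rw [sup_eq_right.2 hle] at hs1'
        exact absurd hs1'.symm (ne_of_gt hpos)
      · rwa [sup_eq_left.2 hge] at hs1'
    -- now extract commutation
    set b := r X i
    set c := r 0 i
    have hvi : v i = c + c := (hhvi i).symm
    have e1 : b + -c + -c + b = a := by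
      calc b + -c + -c + b = b - (c + c) + b := by
            simp [sub_eq_add_neg, neg_add_rev, add_assoc]
        _ = b - v i + b := by rw [← hvi]
        _ = a := e1raw
    have e2' : c + -b + c + -b + (c + c) = -a + (c + c) := by
      calc c + -b + c + -b + (c + c)
          = (c + (-b + (c + c))) - (c + c) + (c + (-b + (c + c))) := by
            simp [sub_eq_add_neg, neg_add_rev, add_assoc]
        _ = (c + (-b + v i)) - v i + (c + (-b + v i)) := by rw [← hvi]
        _ = r (negr v X) i - v i + r (negr v X) i := by rw [hwi]
        _ = -a + v i := e2raw
        _ = -a + (c + c) := by rw [hvi]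
    have e2 : c + -b + c + -b = -a := add_right_cancel e2'
    have hcb : AddCommute c b := comm_of_eqs e1 e2
    have : AddCommute c (b + -c + -c + b) := by
      have hcc : AddCommute c (-c) := (AddCommute.refl c).neg_right
      exact ((hcb.add_right hcc).add_right hcc).add_right hcb
    rwa [e1] at this
  -- commutation with everything, componentwise
  have hcent : ∀ i (a : K i), AddCommute (r 0 i) a := by
    intro i
    refine central_all (hcomm_int i) ?_ (fun g => ?_)
    · have : AddCommute (r 0 i) (r 0 i + r 0 i) :=
        (AddCommute.refl _).add_right (AddCommute.refl _)
      rwa [hhvi i] at this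
    · obtain ⟨n, -, hn⟩ := (hv i).2 g
      exact ⟨n, hn⟩
  refine ⟨hcent, hhv, ?_⟩
  -- M-divisibility
  intro y hy0 hyv
  refine ⟨r y - r 0, ?_, ?_, ?_⟩
  · intro i
    have := h_le_r y hy0 hyv i
    simpa [sub_nonneg] using this
  · intro i
    have hry : r y i ≤ v i := (hrange y hy0 hyv).2 i
    have h1 : r y i - r 0 i ≤ v i - r 0 i := by
      exact sub_le_sub_right hry _
    have h2 : v i - r 0 i = r 0 i := by
      rw [← hhvi i, add_sub_cancel_right]
    have h3 : r 0 i ≤ v i := by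
      rw [← hhvi i]
      exact le_add_of_nonneg_left (by
        have := hm.1 i
        simpa using this)
    calc r y i - r 0 i ≤ v i - r 0 i := h1
      _ = r 0 i := h2
      _ ≤ v i := h3
  · funext i
    show (r y i - r 0 i) + (r y i - r 0 i) = y i
    set S := r y i
    set C := r 0 i
    have hCS : AddCommute C S := hcent i S
    have hvi : v i = C + C := (hhvi i).symm
    have key : (S + -C) + (S + -C) = S - v i + S := by
      have e : -C + S = S + -C := (hCS.neg_left).eq
      calc (S + -C) + (S + -C) = S + (-C + (S + -C)) := by simp [add_assoc]
        _ = S + (-C + (-C + S)) := by rw [← e]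
        _ = S - v i + S := by
            rw [hvi]; simp [sub_eq_add_neg, neg_add_rev, add_assoc]
    have hs1 := sq1i y hy0 hyv i
    rcases le_total (S - v i + S) 0 with hle | hge
    · -- y i = 0 and S = C
      have hy0' : y i = 0 := by
        rw [sup_eq_right.2 hle] at hs1; exact hs1.symm
      have hSS : S + S ≤ v i := by
        have h4 : S - v i + S + v i ≤ 0 + v i := add_le_add hle le_rfl
        have h5 : S - v i + S + v i = S + S := by
          have e : AddCommute (v i) S := by
            rw [hvi]; exact (hcent i S).add_left (hcent i S)
          calc S - v i + S + v i = S + (-v i + (S + v i)) := by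
                simp [sub_eq_add_neg, add_assoc]
            _ = S + (-v i + (v i + S)) := by rw [← e.eq]
            _ = S + S := by rw [neg_add_cancel_left]
        rw [h5] at h4
        simpa using h4
      have hCle : C ≤ S := h_le_r y hy0 hyv i
      have hSC : S = C := by
        apply half_eq
        apply le_antisymm
        · rw [hvi] at hSS; exact hSS
        · exact add_le_add hCle hCle
      rw [hSC, hy0']
      simp
    · have : S - v i + S = y i := by rwa [sup_eq_left.2 hge] at hs1
      rw [sub_eq_add_neg, key, this]

lemma central_comp (hv : ∀ i, IsStrongUnit (v i)) {h : ∀ i, K i}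
    (hc : ∀ g : ∀ i, K i, BoundedElt v g → h + g = g + h) :
    ∀ i (a : K i), AddCommute (h i) a := by
  intro i a
  have h1 := congrFun (hc (padE i a) (padE_bounded hv i a)) i
  exact (by simpa using h1 : h i + a = a + h i)

/-- (ii) → strict square root with the doubling property. -/
lemma BtoA (hv : ∀ i, IsStrongUnit (v i))
    (Hdiv : ∀ y : ∀ i, K i, 0 ≤ y → y ≤ v → ∃ x, 0 ≤ x ∧ x ≤ v ∧ x + x = y)
    (h : ∀ i, K i) (hb : BoundedElt v h)
    (hc : ∀ g : ∀ i, K i, BoundedElt v g → h + g = g + h) (hhv : h + h = v) :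
    ∃ r : (∀ i, K i) → (∀ i, K i), IsSquareRoot v r ∧ IsStrict v r ∧
      ∀ x : ∀ i, K i, 0 ≤ x → x ≤ v → r x + r x = x + v := by
  classical
  have hv0 : (0 : ∀ i, K i) ≤ v := fun i => (hv i).1
  have hci : ∀ i (a : K i), AddCommute (h i) a := central_comp hv hc
  have hcg : ∀ z : ∀ i, K i, AddCommute h z := fun z => funext fun i => hci i (z i)
  have hvcg : ∀ z : ∀ i, K i, AddCommute v z := fun z => by
    rw [← hhv]; exact (hcg z).add_left (hcg z)
  have hhvi : ∀ i, h i + h i = v i := fun i => congrFun hhv i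
  have h0 : (0 : ∀ i, K i) ≤ h := by
    intro i
    have h4 : (0 : K i) + 0 ≤ h i + h i := by
      rw [hhvi i]; simpa using (hv i).1
    simpa using half_le h4
  have halfU : ∀ {a b : ∀ i, K i}, a + a = b + b → a = b := by
    intro a b e
    funext i
    exact half_eq (congrFun e i)
  choose half hf1 hf2 hf3 using Hdiv
  set r : (∀ i, K i) → (∀ i, K i) :=
    fun x => if hx : 0 ≤ x ∧ x ≤ v then half x hx.1 hx.2 + h else 0 with hrdef
  have hrx : ∀ x (hx0 : 0 ≤ x) (hxv : x ≤ v), r x = half x hx0 hxv + h := by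
    intro x hx0 hxv
    rw [hrdef]
    exact dif_pos ⟨hx0, hxv⟩
  have r0 : r 0 = h := by
    have e : half 0 le_rfl hv0 = 0 := halfU (by rw [hf3 0 le_rfl hv0]; simp)
    rw [hrx 0 le_rfl hv0, e, zero_add]
  -- per-x facts
  have hqh : ∀ x (hx0 : 0 ≤ x) (hxv : x ≤ v) (i : ι),
      half x hx0 hxv i ≤ h i := by
    intro x hx0 hxv i
    apply half_le
    have e : half x hx0 hxv i + half x hx0 hxv i = x i := congrFun (hf3 x hx0 hxv) i
    rw [e, hhvi i]
    exact hxv i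
  have hdouble : ∀ x (hx0 : 0 ≤ x) (hxv : x ≤ v),
      (half x hx0 hxv + h) + (half x hx0 hxv + h) = x + v := by
    intro x hx0 hxv
    rw [ch_double (hcg (half x hx0 hxv)), hf3 x hx0 hxv, hhv]
  -- the value of r on complements
  have hnegl_mem : ∀ x, 0 ≤ x → x ≤ v → 0 ≤ negl v x ∧ negl v x ≤ v := by
    intro x hx0 hxv
    constructor
    · intro i
      exact sub_nonneg.2 (hxv i)
    · intro i
      exact sub_le_self (v i) (hx0 i)
  have lhs_eq : ∀ x (hx0 : 0 ≤ x) (hxv : x ≤ v),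
      r (negl v x) = (h + -(half x hx0 hxv)) + h := by
    intro x hx0 hxv
    obtain ⟨hn0, hnv⟩ := hnegl_mem x hx0 hxv
    set q := half x hx0 hxv with hqdef
    have e : (h + -q) + (h + -q) = negl v x := by
      rw [ch_halfneg (hcg q), hhv, hf3 x hx0 hxv]
      show v + -x = v - x
      rw [sub_eq_add_neg]
    have hq' : half (negl v x) hn0 hnv = h + -q :=
      halfU ((hf3 _ hn0 hnv).trans e.symm)
    rw [hrx _ hn0 hnv, hq']
  have eq2 : ∀ x (hx0 : 0 ≤ x) (hxv : x ≤ v),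
      (h + -(half x hx0 hxv)) + h = v + -(half x hx0 hxv) := by
    intro x hx0 hxv
    have := ch_vsub (hcg (half x hx0 hxv))
    rwa [hhv] at this
  have hvq_le : ∀ x (hx0 : 0 ≤ x) (hxv : x ≤ v),
      v + -(half x hx0 hxv) ≤ v := by
    intro x hx0 hxv i
    have := add_le_add_left (neg_nonpos.2 (hf1 x hx0 hxv i)) (v i)
    simpa using this
  refine ⟨r, ⟨?_, ?_, ?_, ?_, ?_⟩, ?_, ?_⟩
  · -- range
    intro x hx0 hxv
    rw [hrx x hx0 hxv]
    constructor
    · intro i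
      have := add_le_add (hf1 x hx0 hxv i) (h0 i)
      simpa using this
    · intro i
      calc half x hx0 hxv i + h i ≤ h i + h i := add_le_add (hqh x hx0 hxv i) le_rfl
        _ = v i := hhvi i
  · -- Sq1
    intro x hx0 hxv
    rw [hrx x hx0 hxv]
    have e : (half x hx0 hxv + h) - v + (half x hx0 hxv + h) = x := by
      rw [← hhv, ch_sq1 (hcg (half x hx0 hxv)), hf3 x hx0 hxv]
    rw [odot, e, sup_eq_left.2 hx0]
  · -- Sq2
    intro x y hx0 hxv hy0 hyv hyx
    rw [hrx x hx0 hxv]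
    intro i
    have hyxi : y i - v i + y i ≤ x i := by
      have h4 := hyx i
      simp only [odot, Pi.sup_apply, Pi.add_apply, Pi.sub_apply, Pi.zero_apply] at h4
      exact le_trans le_sup_left h4
    have hcv : AddCommute (v i) (y i) := by
      rw [← hhvi i]; exact (hci i (y i)).add_left (hci i (y i))
    have e : (y i - v i + y i) + v i = y i + y i := by
      calc (y i - v i + y i) + v i = y i + (-(v i) + (y i + v i)) := by
            simp [sub_eq_add_neg, add_assoc]
        _ = y i + (-(v i) + (v i + y i)) := by rw [← hcv.eq]
        _ = y i + y i := by rw [neg_add_cancel_left]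
    have h4 : y i + y i ≤ x i + v i := by
      rw [← e]; exact add_le_add hyxi le_rfl
    have h5 : x i + v i = (half x hx0 hxv i + h i) + (half x hx0 hxv i + h i) :=
      (congrFun (hdouble x hx0 hxv) i).symm
    exact half_le (h4.trans_eq h5)
  · -- Sq3 left
    intro x hx0 hxv
    set q := half x hx0 hxv with hqdef
    rw [lhs_eq x hx0 hxv, r0, hrx x hx0 hxv]
    have eq1 : (v - (q + h)) + h = (h + -q) + h := by
      rw [← hhv]; exact ch_rhs1
    have hle : (h + -q) + h ≤ v := by
      rw [eq2 x hx0 hxv]; exact hvq_le x hx0 hxv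
    show (h + -q) + h = ((v - (q + h)) + h) ⊓ v
    rw [eq1, inf_eq_left.2 hle]
  · -- Sq3 right
    intro x hx0 hxv
    set q := half x hx0 hxv with hqdef
    have hnegr : negr v x = negl v x := by
      show -x + v = v - x
      rw [sub_eq_add_neg]
      exact ((hvcg x).neg_right).eq.symm
    rw [hnegr, lhs_eq x hx0 hxv, r0, hrx x hx0 hxv]
    have eq3 : h + (-(q + h) + v) = v + -q := by
      rw [← hhv]; exact ch_rhs2 (hcg q)
    have hle : h + (-(q + h) + v) ≤ v := by
      rw [eq3]; exact hvq_le x hx0 hxv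
    show (h + -q) + h = (h + (-(q + h) + v)) ⊓ v
    rw [inf_eq_left.2 hle, eq3, eq2 x hx0 hxv]
  · -- strict
    show r 0 = negl v (r 0)
    rw [r0]
    show h = v - h
    rw [← hhv, add_sub_cancel_right]
  · -- doubling
    intro x hx0 hxv
    rw [hrx x hx0 hxv]
    exact hdouble x hx0 hxv

/-- (ii) → (iii): `G` is two-divisible. -/
lemma BtoC (hv : ∀ i, IsStrongUnit (v i))
    (Hdiv : ∀ y : ∀ i, K i, 0 ≤ y → y ≤ v → ∃ x, 0 ≤ x ∧ x ≤ v ∧ x + x = y)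
    {h : ∀ i, K i}
    (hc : ∀ g : ∀ i, K i, BoundedElt v g → h + g = g + h) (hhv : h + h = v) :
    ∀ g : ∀ i, K i, BoundedElt v g → ∃ b : ∀ i, K i, BoundedElt v b ∧ b + b = g := by
  intro g hg
  obtain ⟨n, hn⟩ := hg
  have hci : ∀ i (a : K i), AddCommute (h i) a := central_comp hv hc
  have hhvi : ∀ i, h i + h i = v i := fun i => congrFun hhv i
  have h0i : ∀ i, (0 : K i) ≤ h i := by
    intro i
    have h4 : (0 : K i) + 0 ≤ h i + h i := by
      rw [hhvi i]; simpa using (hv i).1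
    simpa using half_le h4
  have hlevi : ∀ i, h i ≤ v i := by
    intro i
    rw [← hhvi i]
    exact le_add_of_nonneg_left (h0i i)
  have D : ∀ i (a : K i), 0 ≤ a → a ≤ v i → ∃ b : K i, b + b = a := by
    intro i a ha0 ha1
    obtain ⟨hm0, hm1⟩ := padE_mem hv ha0 ha1
    obtain ⟨x, -, -, hxx⟩ := Hdiv (padE i a) hm0 hm1
    refine ⟨x i, ?_⟩
    have := congrFun hxx i
    rwa [padE_same] at this
  have key : ∀ i, ∃ b : K i, b + b = g i ∧ -(n • v i) ≤ b ∧ b ≤ n • v i := by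
    intro i
    have hp0 : (0 : K i) ≤ g i + n • v i := by
      have := add_le_add (hn i).1 (le_refl (n • v i))
      simpa using this
    have hp2 : g i + n • v i ≤ (2 * n) • v i := by
      calc g i + n • v i ≤ n • v i + n • v i := add_le_add (hn i).2 le_rfl
        _ = (2 * n) • v i := by rw [two_mul, add_nsmul]
    obtain ⟨q, hq⟩ := exists_half_nsmul (hci i) (hhvi i) (D i) (2 * n) _ hp0 hp2
    set c := n • h i with hcdef
    have hnv : n • v i = c + c := by
      rw [hcdef, ← hhvi i, nsmul_two_eq]
    have hcq : AddCommute c q := (hci i q).nsmul_left n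
    have hc0 : (0 : K i) ≤ c := nsmul_nonneg' (h0i i) n
    have hbeq : (q + -c) + (q + -c) = g i := by
      have e : -c + q = q + -c := (hcq.neg_left).eq
      calc (q + -c) + (q + -c) = q + ((-c + q) + -c) := by simp [add_assoc]
        _ = q + ((q + -c) + -c) := by rw [e]
        _ = (q + q) + -(c + c) := by simp [neg_add_rev, add_assoc]
        _ = (g i + n • v i) + -(n • v i) := by rw [hq, ← hnv]
        _ = g i := add_neg_cancel_right _ _
    refine ⟨q + -c, hbeq, ?_, ?_⟩
    · have h8 : -c + -c ≤ g i := by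
        have h9 : -(n • v i) = -c + -c := by rw [hnv, neg_add_rev]
        rw [← h9]
        exact (hn i).1
      have h7 : -c + -c ≤ (q + -c) + (q + -c) := by rw [hbeq]; exact h8
      have h9 : -c ≤ q + -c := half_le h7
      have h10 : -(n • v i) ≤ -c := by
        rw [hnv]
        exact neg_le_neg_iff.2 (le_add_of_nonneg_left hc0)
      exact h10.trans h9
    · have h5 : (q + -c) + (q + -c) ≤ c + c := by
        rw [hbeq, ← hnv]; exact (hn i).2
      have h6 : q + -c ≤ c := half_le h5
      refine h6.trans ?_
      rw [hcdef]
      exact nsmul_mono (hlevi i) n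
  choose b hb1 hb2 hb3 using key
  exact ⟨b, ⟨n, fun i => ⟨hb2 i, hb3 i⟩⟩, funext fun i => hb1 i⟩

/-- (iii) → (ii): `M` is two-divisible. -/
lemma CtoB (hv : ∀ i, IsStrongUnit (v i))
    (Gdiv : ∀ g : ∀ i, K i, BoundedElt v g → ∃ b : ∀ i, K i, BoundedElt v b ∧ b + b = g)
    (h : ∀ i, K i) (hhv : h + h = v) :
    ∀ y : ∀ i, K i, 0 ≤ y → y ≤ v → ∃ x, 0 ≤ x ∧ x ≤ v ∧ x + x = y := by
  intro y hy0 hyv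
  have hhvi : ∀ i, h i + h i = v i := fun i => congrFun hhv i
  have hby : BoundedElt v y := by
    refine ⟨1, fun i => ?_⟩
    constructor
    · simpa using le_trans (neg_nonpos.2 (hv i).1) (hy0 i)
    · simpa using hyv i
  obtain ⟨b, -, hbb⟩ := Gdiv y hby
  refine ⟨b, ?_, ?_, hbb⟩
  · intro i
    have e : b i + b i = y i := congrFun hbb i
    have h4 : (0 : K i) + 0 ≤ b i + b i := by
      rw [e]
      simpa using hy0 i
    simpa using half_le h4
  · intro i
    have h0i : (0 : K i) ≤ h i := by
      have h4 : (0 : K i) + 0 ≤ h i + h i := by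
        rw [hhvi i]; simpa using (hv i).1
      simpa using half_le h4
    have e : b i + b i = y i := congrFun hbb i
    have hb_le : b i + b i ≤ h i + h i := by
      rw [hhvi i, e]
      exact hyv i
    refine (half_le hb_le).trans ?_
    rw [← hhvi i]
    exact le_add_of_nonneg_left h0i

end Main

/-- for a direct product `M = Γ(G,u)` of linearly ordered pseudo
MV-algebras, the following are equivalent: (i) `M` has a strict square root;
(ii) `M` is two-divisible and `u/2 ∈ C(G)`; (iii) `G` is two-divisible and
`u/2 ∈ C(G)`.  In either case `x ↦ (x+u)/2` is a strict square root on `M`. -/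
theorem stmt_9 {ι : Type} (K : ι → Type)
    [∀ i, AddGroup (K i)] [∀ i, LinearOrder (K i)]
    [∀ i, CovariantClass (K i) (K i) (· + ·) (· ≤ ·)]
    [∀ i, CovariantClass (K i) (K i) (Function.swap (· + ·)) (· ≤ ·)]
    (v : ∀ i, K i) (hv : ∀ i, IsStrongUnit (v i)) :
    ((∃ r : (∀ i, K i) → (∀ i, K i), IsSquareRoot v r ∧ IsStrict v r) ↔
      ((∀ y : ∀ i, K i, 0 ≤ y → y ≤ v → ∃ x : ∀ i, K i, 0 ≤ x ∧ x ≤ v ∧ x + x = y) ∧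
       (∃ h : ∀ i, K i, BoundedElt v h ∧
          (∀ g : ∀ i, K i, BoundedElt v g → h + g = g + h) ∧ h + h = v))) ∧
    (((∀ y : ∀ i, K i, 0 ≤ y → y ≤ v → ∃ x : ∀ i, K i, 0 ≤ x ∧ x ≤ v ∧ x + x = y) ∧
       (∃ h : ∀ i, K i, BoundedElt v h ∧
          (∀ g : ∀ i, K i, BoundedElt v g → h + g = g + h) ∧ h + h = v)) ↔
      ((∀ g : ∀ i, K i, BoundedElt v g →
          ∃ h : ∀ i, K i, BoundedElt v h ∧ h + h = g) ∧
       (∃ h : ∀ i, K i, BoundedElt v h ∧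
          (∀ g : ∀ i, K i, BoundedElt v g → h + g = g + h) ∧ h + h = v))) ∧
    ((∃ r : (∀ i, K i) → (∀ i, K i), IsSquareRoot v r ∧ IsStrict v r) →
      ∃ r : (∀ i, K i) → (∀ i, K i), IsSquareRoot v r ∧ IsStrict v r ∧
        ∀ x : ∀ i, K i, 0 ≤ x → x ≤ v → r x + r x = x + v) := by
  have AtoB : (∃ r : (∀ i, K i) → (∀ i, K i), IsSquareRoot v r ∧ IsStrict v r) →
      ((∀ y : ∀ i, K i, 0 ≤ y → y ≤ v → ∃ x : ∀ i, K i, 0 ≤ x ∧ x ≤ v ∧ x + x = y) ∧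
       (∃ h : ∀ i, K i, BoundedElt v h ∧
          (∀ g : ∀ i, K i, BoundedElt v g → h + g = g + h) ∧ h + h = v)) := by
    rintro ⟨r, hr, hs⟩
    obtain ⟨hcent, hhv, hMdiv⟩ := keyA hv r hr hs
    refine ⟨hMdiv, r 0, ⟨1, fun i => ?_⟩,
      fun g _ => funext fun i => hcent i (g i), hhv⟩
    have e : r 0 i + r 0 i = v i := congrFun hhv i
    have h0i : (0 : K i) ≤ r 0 i := by
      have h4 : (0 : K i) + 0 ≤ r 0 i + r 0 i := by
        rw [e]; simpa using (hv i).1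
      simpa using half_le h4
    have h1i : r 0 i ≤ v i := by
      rw [← e]; exact le_add_of_nonneg_left h0i
    constructor
    · simpa using le_trans (neg_nonpos.2 (hv i).1) h0i
    · simpa using h1i
  refine ⟨⟨AtoB, ?_⟩, ⟨?_, ?_⟩, ?_⟩
  · rintro ⟨Hdiv, h, hb, hc, hhv⟩
    obtain ⟨r, h1, h2, -⟩ := BtoA hv Hdiv h hb hc hhv
    exact ⟨r, h1, h2⟩
  · rintro ⟨Hdiv, h, hb, hc, hhv⟩
    exact ⟨BtoC hv Hdiv hc hhv, ⟨h, hb, hc, hhv⟩⟩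
  · rintro ⟨Gdiv, h, hb, hc, hhv⟩
    exact ⟨CtoB hv Gdiv h hhv, ⟨h, hb, hc, hhv⟩⟩
  · intro hA
    obtain ⟨Hdiv, h, hb, hc, hhv⟩ := AtoB hA
    exact BtoA hv Hdiv h hb hc hhv
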